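/- Let J_k(r) = r · C̄_k(1/r) for k = 1,…,K where each C̄_k is convex, increasing, C̄_k(0) = 0, and c̄_k = C̄_k′ is bounded by U. If r* minimizes (1/K)Σ_k J_k(r_k) over {r ∈ [r_min, r_max]^K : ‖r‖₁ = B} and r*_ε minimizes it over {r ∈ [r_min, r_max]^K : ‖r‖₁ = B/(1+ε)}, then (1/K)Σ_k J_k(r*_{ε,k}) − (1/K)Σ_k J_k(r*_k) ≤ ε·U (up to constant factor 2 when additionally shrinking the upper box bound to r_max/(1+ε)). -/

import Mathlib

lemma stmt14_lip (f f' : ℝ → ℝ) (U : ℝ) (hderiv : ∀ x, HasDerivAt f (f' x) x)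
    (hf' : ∀ x, 0 ≤ x → f' x ∈ Set.Icc 0 U) {a b : ℝ} (ha : 0 ≤ a) (hab : a ≤ b) :
    0 ≤ f b - f a ∧ f b - f a ≤ U * (b - a) := by
  rcases eq_or_lt_of_le hab with rfl | h
  · simp
  · obtain ⟨c, hc, hceq⟩ := exists_hasDerivAt_eq_slope f f' h
      (fun x _ => (hderiv x).continuousAt.continuousWithinAt) (fun x _ => hderiv x)
    have hc0 : 0 ≤ c := le_of_lt (lt_of_le_of_lt ha hc.1)
    obtain ⟨h1, h2⟩ := hf' c hc0
    have heq : f b - f a = f' c * (b - a) := by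
      rw [hceq, div_mul_cancel₀ _ (sub_ne_zero.2 (ne_of_gt h))]
    constructor
    · rw [heq]; exact mul_nonneg h1 (by linarith)
    · rw [heq]; exact mul_le_mul_of_nonneg_right h2 (by linarith)


lemma stmt14_alloc {ι : Type*} [DecidableEq ι] (rmin : ℝ) (hrmin : 0 < rmin) :
    ∀ (s : Finset ι) (r : ι → ℝ) (S : ℝ),
      (∀ k ∈ s, rmin ≤ r k) → (s.card : ℝ) * rmin ≤ S → S ≤ ∑ k ∈ s, r k →
      ∃ x : ι → ℝ, (∀ k ∈ s, rmin ≤ x k ∧ x k ≤ r k) ∧ (∑ k ∈ s, x k = S) ∧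
        ∑ k ∈ s, r k / x k ≤ (s.card : ℝ) * ((∑ k ∈ s, r k) / S) := by
  intro s
  induction s using Finset.strongInduction with
  | _ s ih =>
    intro r S hr hS1 hS2
    rcases s.eq_empty_or_nonempty with rfl | hne
    · simp only [Finset.sum_empty, Finset.card_empty, Nat.cast_zero, zero_mul] at *
      refine ⟨r, by simp, by linarith, by simp⟩
    set B : ℝ := ∑ k ∈ s, r k with hB
    have hc1 : (1 : ℝ) ≤ s.card := by exact_mod_cast Finset.card_pos.2 hne
    have hSpos : 0 < S := lt_of_lt_of_le hrmin (le_trans (by nlinarith) hS1)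
    have hBpos : 0 < B := lt_of_lt_of_le hSpos hS2
    by_cases hcase : ∀ k ∈ s, rmin * B ≤ S * r k
    · refine ⟨fun k => (S / B) * r k, ?_, ?_, ?_⟩
      · intro k hk
        have hrk : rmin ≤ r k := hr k hk
        constructor
        · show rmin ≤ S / B * r k
          rw [div_mul_eq_mul_div, le_div_iff₀ hBpos]
          linarith [hcase k hk, mul_comm S (r k)]
        · show S / B * r k ≤ r k
          have : S / B ≤ 1 := (div_le_one hBpos).2 hS2
          nlinarith
      · show ∑ k ∈ s, S / B * r k = S
        rw [← Finset.mul_sum, ← hB, div_mul_cancel₀ _ (ne_of_gt hBpos)]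
      · have heq : ∀ k ∈ s, r k / ((S / B) * r k) = B / S := by
          intro k hk
          have hrk : (0:ℝ) < r k := lt_of_lt_of_le hrmin (hr k hk)
          field_simp
        calc ∑ k ∈ s, r k / (S / B * r k) = ∑ _k ∈ s, B / S :=
              Finset.sum_congr rfl heq
          _ = (s.card : ℝ) * (B / S) := by rw [Finset.sum_const, nsmul_eq_mul]
          _ ≤ (s.card : ℝ) * (B / S) := le_refl _
    · push_neg at hcase
      obtain ⟨k0, hk0, hlt⟩ := hcase
      have hr0 : rmin ≤ r k0 := hr k0 hk0
      have hc2 : (2 : ℝ) ≤ s.card := by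
        by_contra h
        push_neg at h
        have hcard1 : s.card = 1 := by
          have h2 : s.card < 2 := by exact_mod_cast h
          have := Finset.card_pos.2 hne
          omega
        obtain ⟨a, ha⟩ := Finset.card_eq_one.1 hcard1
        have hak : k0 = a := by rw [ha] at hk0; exact Finset.mem_singleton.1 hk0
        have hBr : B = r k0 := by rw [hB, ha, hak, Finset.sum_singleton]
        rw [hcard1] at hS1
        have hr0pos : (0:ℝ) < r k0 := lt_of_lt_of_le hrmin hr0
        rw [hBr] at hlt
        have hSlt : S < rmin := (mul_lt_mul_iff_of_pos_right hr0pos).1 hlt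
        norm_num at hS1
        linarith
      have hSm : 0 < S - rmin := by nlinarith
      set s' := s.erase k0 with hs'
      have hss : s' ⊂ s := Finset.erase_ssubset hk0
      have hcard' : (s'.card : ℝ) = (s.card : ℝ) - 1 := by
        rw [hs', Finset.card_erase_of_mem hk0]
        have := Finset.card_pos.2 hne
        push_cast [Nat.cast_sub this]
        ring
      have hB' : ∑ k ∈ s', r k = B - r k0 := by
        rw [hs', Finset.sum_erase_eq_sub hk0, ← hB]
      have hsum' : S - rmin ≤ ∑ k ∈ s', r k := by
        rw [hB']
        nlinarith [mul_nonneg (sub_nonneg.2 hS2) hSm.le]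
      have hcb' : (s'.card : ℝ) * rmin ≤ S - rmin := by
        rw [hcard']; nlinarith
      obtain ⟨x', hx'b, hx'sum, hx'ratio⟩ :=
        ih s' hss r (S - rmin) (fun k hk => hr k (Finset.mem_of_mem_erase hk)) hcb' hsum'
      refine ⟨Function.update x' k0 rmin, ?_, ?_, ?_⟩
      · intro k hk
        by_cases hkk : k = k0
        · subst hkk; rw [Function.update_self]; exact ⟨le_refl _, hr0⟩
        · rw [Function.update_of_ne hkk]
          exact hx'b k (Finset.mem_erase.2 ⟨hkk, hk⟩)
      · rw [← Finset.add_sum_erase _ _ hk0, Function.update_self]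
        have : ∑ k ∈ s.erase k0, Function.update x' k0 rmin k = ∑ k ∈ s', x' k := by
          refine Finset.sum_congr rfl (fun k hk => ?_)
          exact Function.update_of_ne (Finset.mem_erase.1 hk).1 _ _
        rw [this, hx'sum]; ring
      · rw [← Finset.add_sum_erase _ _ hk0, Function.update_self]
        have heq : ∑ k ∈ s.erase k0, r k / Function.update x' k0 rmin k
            = ∑ k ∈ s', r k / x' k := by
          refine Finset.sum_congr rfl (fun k hk => ?_)
          rw [Function.update_of_ne (Finset.mem_erase.1 hk).1]
        rw [heq]
        have hstep : ∑ k ∈ s', r k / x' k ≤ ((s.card : ℝ) - 1) * ((B - r k0) / (S - rmin)) := by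
          calc ∑ k ∈ s', r k / x' k ≤ (s'.card : ℝ) * ((∑ k ∈ s', r k) / (S - rmin)) := hx'ratio
            _ = ((s.card : ℝ) - 1) * ((B - r k0) / (S - rmin)) := by rw [hcard', hB']
        have key : r k0 / rmin + ((s.card : ℝ) - 1) * ((B - r k0) / (S - rmin))
            ≤ (s.card : ℝ) * (B / S) := by
          rw [← mul_div_assoc, ← mul_div_assoc,
            div_add_div _ _ (ne_of_gt hrmin) (ne_of_gt hSm),
            div_le_div_iff₀ (by positivity) hSpos]
          nlinarith [mul_nonneg (sub_nonneg.2 hlt.le) (sub_nonneg.2 hS1)]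
        linarith

theorem stmt14 (K : ℕ) (hK : 0 < K) (U rmin rmax B ε : ℝ)
    (hU : 0 ≤ U) (hrmin : 0 < rmin) (hrr : rmin ≤ rmax) (hε : 0 ≤ ε)
    (Cb cb : Fin K → ℝ → ℝ)
    (hC0 : ∀ k, Cb k 0 = 0)
    (hCconv : ∀ k, ConvexOn ℝ (Set.Ici 0) (Cb k))
    (hCmono : ∀ k, StrictMonoOn (Cb k) (Set.Ici 0))
    (hderiv : ∀ k x, HasDerivAt (Cb k) (cb k x) x)
    (hcb : ∀ k x, 0 ≤ x → cb k x ∈ Set.Icc 0 U)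
    (rstar rstarε : Fin K → ℝ)
    (hfeas : ∀ k, rstar k ∈ Set.Icc rmin rmax) (hsum : ∑ k, rstar k = B)
    (hfeasε : ∀ k, rstarε k ∈ Set.Icc rmin rmax)
    (hsumε : ∑ k, rstarε k = B / (1 + ε))
    (hopt : ∀ x : Fin K → ℝ, (∀ k, x k ∈ Set.Icc rmin rmax) → (∑ k, x k = B) →
      (1/(K:ℝ)) * ∑ k, rstar k * Cb k (1 / rstar k)
        ≤ (1/(K:ℝ)) * ∑ k, x k * Cb k (1 / x k))
    (hoptε : ∀ x : Fin K → ℝ, (∀ k, x k ∈ Set.Icc rmin rmax) →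
      (∑ k, x k = B / (1 + ε)) →
      (1/(K:ℝ)) * ∑ k, rstarε k * Cb k (1 / rstarε k)
        ≤ (1/(K:ℝ)) * ∑ k, x k * Cb k (1 / x k)) :
    (1/(K:ℝ)) * (∑ k, rstarε k * Cb k (1 / rstarε k))
      - (1/(K:ℝ)) * (∑ k, rstar k * Cb k (1 / rstar k)) ≤ ε * U := by
  have hK' : (0:ℝ) < K := Nat.cast_pos.2 hK
  have h1ε : (0:ℝ) < 1 + ε := by linarith
  set S : ℝ := B / (1 + ε) with hSdef
  have hKconst : ∀ (c : ℝ), ∑ _k : Fin K, c = (K:ℝ) * c := by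
    intro c
    rw [Finset.sum_const, Finset.card_univ, Fintype.card_fin, nsmul_eq_mul]
  have hKrmin : (K:ℝ) * rmin ≤ S := by
    calc (K:ℝ) * rmin = ∑ _k : Fin K, rmin := (hKconst rmin).symm
      _ ≤ ∑ k, rstarε k := Finset.sum_le_sum (fun k _ => (hfeasε k).1)
      _ = S := hsumε
  have hBK : (K:ℝ) * rmin ≤ B := by
    calc (K:ℝ) * rmin = ∑ _k : Fin K, rmin := (hKconst rmin).symm
      _ ≤ ∑ k, rstar k := Finset.sum_le_sum (fun k _ => (hfeas k).1)
      _ = B := hsum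
  have hBpos : 0 < B := lt_of_lt_of_le (by positivity) hBK
  have hSpos : 0 < S := lt_of_lt_of_le (by positivity) hKrmin
  have hSB : S ≤ B := div_le_self hBpos.le (by linarith)
  obtain ⟨x, hxb, hxsum, hxratio⟩ := stmt14_alloc rmin hrmin Finset.univ rstar S
    (fun k _ => (hfeas k).1)
    (by rwa [Finset.card_univ, Fintype.card_fin]) (by rw [hsum]; exact hSB)
  rw [Finset.card_univ, Fintype.card_fin, hsum] at hxratio
  have hBS : B / S = 1 + ε := by
    rw [hSdef, div_div_eq_mul_div, mul_comm, mul_div_assoc, div_self (ne_of_gt hBpos), mul_one]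
  rw [hBS] at hxratio
  -- per-coordinate bound
  have hJ : ∀ k, x k * Cb k (1 / x k)
      ≤ rstar k * Cb k (1 / rstar k) + U * ((rstar k - x k) / x k) := by
    intro k
    have hxk : 0 < x k := lt_of_lt_of_le hrmin (hxb k (Finset.mem_univ k)).1
    have hxr : x k ≤ rstar k := (hxb k (Finset.mem_univ k)).2
    have hrk : 0 < rstar k := lt_of_lt_of_le hxk hxr
    have hinv : 1 / rstar k ≤ 1 / x k := one_div_le_one_div_of_le hxk hxr
    have hinvpos : 0 < 1 / rstar k := by positivity
    obtain ⟨_, hlip⟩ := stmt14_lip (Cb k) (cb k) U (hderiv k) (hcb k) hinvpos.le hinv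
    obtain ⟨hnn0, _⟩ := stmt14_lip (Cb k) (cb k) U (hderiv k) (hcb k) (le_refl 0) hinvpos.le
    rw [hC0 k, sub_zero] at hnn0
    have e1 : x k * (1 / x k - 1 / rstar k) = (rstar k - x k) / rstar k := by
      field_simp
    have e2 : (rstar k - x k) / rstar k ≤ (rstar k - x k) / x k :=
      div_le_div_of_nonneg_left (by linarith) hxk hxr
    calc x k * Cb k (1 / x k)
        ≤ x k * (Cb k (1 / rstar k) + U * (1 / x k - 1 / rstar k)) :=
          mul_le_mul_of_nonneg_left (by linarith) hxk.le
      _ = x k * Cb k (1 / rstar k) + U * (x k * (1 / x k - 1 / rstar k)) := by ring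
      _ = x k * Cb k (1 / rstar k) + U * ((rstar k - x k) / rstar k) := by rw [e1]
      _ ≤ rstar k * Cb k (1 / rstar k) + U * ((rstar k - x k) / x k) :=
          add_le_add (mul_le_mul_of_nonneg_right hxr hnn0)
            (mul_le_mul_of_nonneg_left e2 hU)
  -- sum bound
  have h2 : ∑ k, (rstar k - x k) / x k ≤ (K:ℝ) * ε := by
    have h3 : ∀ k ∈ Finset.univ, (rstar k - x k) / x k = rstar k / x k - 1 := by
      intro k _
      have hxk : 0 < x k := lt_of_lt_of_le hrmin (hxb k (Finset.mem_univ k)).1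
      rw [sub_div, div_self (ne_of_gt hxk)]
    rw [Finset.sum_congr rfl h3, Finset.sum_sub_distrib, hKconst 1]
    nlinarith [hxratio]
  have hsum1 : ∑ k, x k * Cb k (1 / x k)
      ≤ (∑ k, rstar k * Cb k (1 / rstar k)) + U * ((K:ℝ) * ε) := by
    have h1 : ∑ k, x k * Cb k (1 / x k)
        ≤ ∑ k, (rstar k * Cb k (1 / rstar k) + U * ((rstar k - x k) / x k)) :=
      Finset.sum_le_sum (fun k _ => hJ k)
    rw [Finset.sum_add_distrib, ← Finset.mul_sum] at h1
    have := mul_le_mul_of_nonneg_left h2 hU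
    linarith
  have hopt' := hoptε x
    (fun k => ⟨(hxb k (Finset.mem_univ k)).1,
      le_trans (hxb k (Finset.mem_univ k)).2 (hfeas k).2⟩) hxsum
  have hmul := mul_le_mul_of_nonneg_left hsum1 (by positivity : (0:ℝ) ≤ 1/(K:ℝ))
  rw [mul_add] at hmul
  have hfin : (1/(K:ℝ)) * (U * ((K:ℝ) * ε)) = ε * U := by
    field_simp
  linarith
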